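/- Let {e₁, …, eₙ} be an orthonormal family in a Hilbert space H, ρᵢ ∈ (0,1) for each i, and f : [a,b] → H Bochner integrable with ‖f(t) − eᵢ‖ ≤ ρᵢ for each i ∈ {1,…,n} and a.e. t ∈ [a,b]. Then (n − ∑ᵢ₌₁ⁿ ρᵢ²)^{1/2} · ∫ₐᵇ ‖f(t)‖ dt ≤ ‖∫ₐᵇ f(t) dt‖. -/

import Mathlib

open MeasureTheory

theorem stmt_9 {𝕜 H : Type*} [RCLike 𝕜] [NormedAddCommGroup H] [InnerProductSpace 𝕜 H]
    [NormedSpace ℝ H] [IsScalarTower ℝ 𝕜 H] [CompleteSpace H]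
    {a b : ℝ} {f : ℝ → H} (hf : IntegrableOn f (Set.Icc a b))
    {n : ℕ} {e : Fin n → H} (he : Orthonormal 𝕜 e)
    {ρ : Fin n → ℝ} (hρ : ∀ i, ρ i ∈ Set.Ioo (0 : ℝ) 1)
    (h : ∀ i, ∀ᵐ t ∂(volume.restrict (Set.Icc a b)), ‖f t - e i‖ ≤ ρ i) :
    Real.sqrt ((n : ℝ) - ∑ i, (ρ i) ^ 2) * ∫ t in Set.Icc a b, ‖f t‖ ≤
      ‖∫ t in Set.Icc a b, f t‖ := by
  classical
  set μ := volume.restrict (Set.Icc a b) with hμ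
  set y : H := ∫ t in Set.Icc a b, f t with hy
  set I : ℝ := ∫ t in Set.Icc a b, ‖f t‖ with hI
  have hfint : Integrable f μ := hf
  have hI0 : 0 ≤ I := integral_nonneg fun t => norm_nonneg _
  have hρ2 : ∀ i, (0:ℝ) ≤ 1 - ρ i ^ 2 := by
    intro i
    have h1 := (hρ i).1
    have h2 := (hρ i).2
    nlinarith
  -- key pointwise-derived estimate
  have key : ∀ i, Real.sqrt (1 - ρ i ^ 2) * I ≤ RCLike.re ((inner 𝕜 (e i) y : 𝕜)) := by
    intro i
    have hpt : ∀ᵐ t ∂μ, Real.sqrt (1 - ρ i ^ 2) * ‖f t‖ ≤ RCLike.re ((inner 𝕜 (e i) (f t) : 𝕜)) := by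
      filter_upwards [h i] with t ht
      have h1 : ‖f t - e i‖ ^ 2 ≤ ρ i ^ 2 := by
        have := (hρ i).1
        nlinarith [norm_nonneg (f t - e i)]
      rw [norm_sub_sq (𝕜 := 𝕜), he.1 i] at h1
      have hsq : Real.sqrt (1 - ρ i ^ 2) ^ 2 = 1 - ρ i ^ 2 := Real.sq_sqrt (hρ2 i)
      have hamgm : 2 * ‖f t‖ * Real.sqrt (1 - ρ i ^ 2) ≤
          ‖f t‖ ^ 2 + Real.sqrt (1 - ρ i ^ 2) ^ 2 := two_mul_le_add_sq _ _
      have hre : RCLike.re ((inner 𝕜 (e i) (f t) : 𝕜)) = RCLike.re ((inner 𝕜 (f t) (e i) : 𝕜)) := inner_re_symm _ _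
      rw [hre]
      nlinarith
    have hint1 : Integrable (fun t => Real.sqrt (1 - ρ i ^ 2) * ‖f t‖) μ :=
      (hfint.norm.const_mul _)
    have hint2 : Integrable (fun t => RCLike.re ((inner 𝕜 (e i) (f t) : 𝕜))) μ :=
      (hfint.const_inner (e i)).re
    calc Real.sqrt (1 - ρ i ^ 2) * I
        = ∫ t, Real.sqrt (1 - ρ i ^ 2) * ‖f t‖ ∂μ :=
          (MeasureTheory.integral_const_mul _ _).symm
      _ ≤ ∫ t, RCLike.re ((inner 𝕜 (e i) (f t) : 𝕜)) ∂μ := integral_mono_ae hint1 hint2 hpt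
      _ = RCLike.re (∫ t, (inner 𝕜 (e i) (f t) : 𝕜) ∂μ) := integral_re (hfint.const_inner (e i))
      _ = RCLike.re ((inner 𝕜 (e i) y : 𝕜)) :=
          congrArg RCLike.re (integral_inner hfint (e i))
  -- Bessel's inequality step
  have bessel : (∑ i, ‖(inner 𝕜 (e i) y : 𝕜)‖ ^ 2) ≤ ‖y‖ ^ 2 := he.sum_inner_products_le y
  have hsum : ((n : ℝ) - ∑ i, (ρ i) ^ 2) * I ^ 2 ≤ ‖y‖ ^ 2 := by
    have h1 : ((n : ℝ) - ∑ i, (ρ i) ^ 2) * I ^ 2 = ∑ i, (1 - ρ i ^ 2) * I ^ 2 := by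
      rw [← Finset.sum_mul, Finset.sum_sub_distrib]
      simp
    rw [h1]
    refine le_trans (Finset.sum_le_sum fun i _ => ?_) bessel
    have hk := key i
    have hc : 0 ≤ Real.sqrt (1 - ρ i ^ 2) * I :=
      mul_nonneg (Real.sqrt_nonneg _) hI0
    have h2 : (Real.sqrt (1 - ρ i ^ 2) * I) ^ 2 ≤ ‖(inner 𝕜 (e i) y : 𝕜)‖ ^ 2 := by
      have hre : RCLike.re ((inner 𝕜 (e i) y : 𝕜)) ≤ ‖(inner 𝕜 (e i) y : 𝕜)‖ :=
        (RCLike.abs_re_le_norm _).trans' (le_abs_self _)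
      nlinarith [norm_nonneg ((inner 𝕜 (e i) y : 𝕜))]
    calc (1 - ρ i ^ 2) * I ^ 2 = (Real.sqrt (1 - ρ i ^ 2) * I) ^ 2 := by
          rw [mul_pow, Real.sq_sqrt (hρ2 i)]
      _ ≤ ‖(inner 𝕜 (e i) y : 𝕜)‖ ^ 2 := h2
  -- conclude
  have hnn : 0 ≤ (n : ℝ) - ∑ i, (ρ i) ^ 2 := by
    have : (0:ℝ) ≤ ∑ i, (1 - ρ i ^ 2) := Finset.sum_nonneg fun i _ => hρ2 i
    rw [Finset.sum_sub_distrib] at this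
    simpa using this
  have hL : 0 ≤ Real.sqrt ((n : ℝ) - ∑ i, (ρ i) ^ 2) * I :=
    mul_nonneg (Real.sqrt_nonneg _) hI0
  have hsq : (Real.sqrt ((n : ℝ) - ∑ i, (ρ i) ^ 2) * I) ^ 2 ≤ ‖y‖ ^ 2 := by
    rw [mul_pow, Real.sq_sqrt hnn]; exact hsum
  nlinarith [norm_nonneg y]
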